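/- arXiv:2507.03856 — 2 statements merged into one kernel-verified Lean document; each statement's English description precedes it below -/
import Mathlib

section
/- Let B be a real matrix with columns b_1, ..., b_n each of unit Euclidean norm, and let μ(B) = max_{i≠j} |b_i^T b_j| be its mutual coherence. If s ∈ ℝ^n satisfies B s = 0 and ‖s‖_0 < 1 + 1/μ(B), then s = 0. Equivalently, no nonzero vector in the null space of B has fewer than 1 + 1/μ(B) nonzero entries. -/
/-- Mutual coherence of a matrix `B` (whose columns are assumed unit-norm):
the supremum of `|b_i^T b_j|` over pairs of distinct columns. -/
noncomputable def mutualCoherence {d n : ℕ} (B : Matrix (Fin d) (Fin n) ℝ) : ℝ :=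
  sSup {x : ℝ | ∃ i j : Fin n, i ≠ j ∧ x = |∑ k, B k i * B k j|}

/-- `‖s‖₀`: the number of nonzero entries of `s`. -/
noncomputable def l0norm {n : ℕ} (s : Fin n → ℝ) : ℕ :=
  (Finset.univ.filter fun i => s i ≠ 0).card

theorem nullspace_spark_bound {d n : ℕ} (B : Matrix (Fin d) (Fin n) ℝ)
    (hunit : ∀ j : Fin n, ∑ k, (B k j) ^ 2 = 1)
    (s : Fin n → ℝ) (hnull : B.mulVec s = 0)
    (hsparse : (l0norm s : ℝ) < 1 + 1 / mutualCoherence B) :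
    s = 0 := by
  set μ := mutualCoherence B with hμdef
  have hbdd : BddAbove {x : ℝ | ∃ i j : Fin n, i ≠ j ∧ x = |∑ k, B k i * B k j|} := by
    apply Set.Finite.bddAbove
    apply Set.Finite.subset
      (Set.finite_range fun p : Fin n × Fin n => |∑ k, B k p.1 * B k p.2|)
    rintro x ⟨i, j, -, rfl⟩
    exact ⟨(i, j), rfl⟩
  have hcoh : ∀ i j : Fin n, i ≠ j → |∑ k, B k i * B k j| ≤ μ := fun i j hij =>
    le_csSup hbdd ⟨i, j, hij, rfl⟩
  by_contra hs
  have hT : (Finset.univ.filter fun i => s i ≠ 0).Nonempty := by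
    rcases Function.ne_iff.mp hs with ⟨i, hi⟩
    exact ⟨i, Finset.mem_filter.mpr ⟨Finset.mem_univ i, hi⟩⟩
  set T := Finset.univ.filter fun i => s i ≠ 0 with hTdef
  have hl0 : l0norm s = T.card := rfl
  have hcard1 : 1 ≤ T.card := Finset.card_pos.mpr hT
  obtain ⟨i, hiT, hmax⟩ := T.exists_max_image (fun j => |s j|) hT
  have hsi : s i ≠ 0 := (Finset.mem_filter.mp hiT).2
  have hsi' : 0 < |s i| := abs_pos.mpr hsi
  have heq : ∀ k, ∑ j, B k j * s j = 0 := fun k => congrFun hnull k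
  have h1 : ∑ j, (∑ k, B k i * B k j) * s j = 0 := by
    calc ∑ j, (∑ k, B k i * B k j) * s j
        = ∑ j, ∑ k, B k i * (B k j * s j) := by
          simp [Finset.sum_mul, mul_assoc]
      _ = ∑ k, ∑ j, B k i * (B k j * s j) := Finset.sum_comm
      _ = ∑ k, B k i * ∑ j, B k j * s j := by simp [Finset.mul_sum]
      _ = 0 := by simp [heq]
  have hii : (∑ k, B k i * B k i) = 1 := by
    simpa [pow_two] using hunit i
  have hsplit : s i + ∑ j ∈ Finset.univ.erase i, (∑ k, B k i * B k j) * s j = 0 := by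
    rw [← Finset.add_sum_erase _ _ (Finset.mem_univ i), hii, one_mul] at h1
    exact h1
  have hrestrict : ∑ j ∈ Finset.univ.erase i, (∑ k, B k i * B k j) * s j
      = ∑ j ∈ T.erase i, (∑ k, B k i * B k j) * s j := by
    refine (Finset.sum_subset ?_ ?_).symm
    · exact Finset.erase_subset_erase _ (Finset.filter_subset _ _)
    · intro j hj hj'
      have : s j = 0 := by
        by_contra h
        exact hj' (Finset.mem_erase.mpr ⟨(Finset.mem_erase.mp hj).1,
          Finset.mem_filter.mpr ⟨Finset.mem_univ j, h⟩⟩)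
      simp [this]
  have key : s i = -∑ j ∈ T.erase i, (∑ k, B k i * B k j) * s j := by
    rw [← hrestrict]; linarith [hsplit]
  have hbound : |s i| ≤ (T.erase i).card • (μ * |s i|) := by
    have habs : |s i| = |∑ j ∈ T.erase i, (∑ k, B k i * B k j) * s j| := by
      rw [key, abs_neg]
    calc |s i| = |∑ j ∈ T.erase i, (∑ k, B k i * B k j) * s j| := habs
      _ ≤ ∑ j ∈ T.erase i, |(∑ k, B k i * B k j) * s j| := Finset.abs_sum_le_sum_abs _ _
      _ ≤ (T.erase i).card • (μ * |s i|) := ?_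
    refine Finset.sum_le_card_nsmul _ _ _ ?_
    intro j hj
    have hjne : j ≠ i := (Finset.mem_erase.mp hj).1
    have hjT : j ∈ T := (Finset.mem_erase.mp hj).2
    rw [abs_mul]
    exact mul_le_mul (hcoh i j (fun h => hjne h.symm)) (hmax j hjT)
      (abs_nonneg _) (le_trans (abs_nonneg _) (hcoh i j (fun h => hjne h.symm)))
  have hμpos : 0 < μ := by
    rcases lt_or_ge 0 μ with h | h
    · exact h
    · exfalso
      have h1μ : 1 / μ ≤ 0 := one_div_nonpos.mpr h
      have : (l0norm s : ℝ) < 1 := by linarith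
      have : (1 : ℝ) ≤ (l0norm s : ℝ) := by
        rw [hl0]; exact_mod_cast hcard1
      linarith
  have hcarde : ((T.erase i).card : ℝ) = (T.card : ℝ) - 1 := by
    rw [Finset.card_erase_of_mem hiT, Nat.cast_sub hcard1]
    simp
  have hbound' : |s i| ≤ ((T.card : ℝ) - 1) * (μ * |s i|) := by
    rw [nsmul_eq_mul, hcarde] at hbound
    exact hbound
  have h2 : 1 ≤ ((T.card : ℝ) - 1) * μ := by
    nlinarith
  have h3 : 1 / μ ≤ (T.card : ℝ) - 1 := by
    rw [div_le_iff₀ hμpos]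
    linarith
  rw [hl0] at hsparse
  linarith
end

section
/- Let X ∈ ℝ^{(m-1)×r} with m > r + 2, suppose [X 1] has full column rank, and let R̄ ∈ ℝ^{(m-r-2)×(m-1)} have rows forming an orthonormal basis of the null space of [X 1]^T. Assume the columns of R̄ are nonzero and let μ(R̄) be the mutual coherence of R̄ after normalizing its columns to unit norm. Suppose m̃_j = X q_j + s_j + c_j 1 where s_j ∈ ℝ^{m-1} is k-sparse and k < 1 + 1/μ(R̄). Then R̄ m̃_j = 0 if and only if s_j = 0. In particular, applying R̄ to the measurement matrix whose columns are the m̃_j, the zero columns of the product are exactly those of the uncorrupted target nodes. -/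
open Matrix

/-- Normalize each column of a matrix to unit Euclidean norm. -/
noncomputable def colNormalize {d n : ℕ} (B : Matrix (Fin d) (Fin n) ℝ) :
    Matrix (Fin d) (Fin n) ℝ :=
  Matrix.of fun i j => B i j / Real.sqrt (∑ k, B k j ^ 2)

/-- The augmented matrix `[X 1]` obtained by adjoining the all-ones column to `X`. -/
noncomputable def augOnes {d r : ℕ} (X : Matrix (Fin d) (Fin r) ℝ) :
    Matrix (Fin d) (Fin (r + 1)) ℝ :=
  Matrix.of fun i j => if h : (j : ℕ) < r then X i ⟨j, h⟩ else 1

lemma sparse_null_aux {d n : ℕ} (B : Matrix (Fin d) (Fin n) ℝ) (μ : ℝ) (hμ0 : 0 ≤ μ)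
    (hunit : ∀ j, ∑ i, B i j ^ 2 = 1)
    (hcoh : ∀ i j : Fin n, i ≠ j → |∑ k, B k i * B k j| ≤ μ)
    (k : ℕ) (hk : (k : ℝ) * μ < 1 + μ)
    (t : Fin n → ℝ) (hcard : ((Finset.univ.filter fun i => t i ≠ 0).card : ℝ) ≤ k)
    (ht : B.mulVec t = 0) : t = 0 := by
  by_contra htne
  set S := ∑ j, t j ^ 2 with hS
  have hSpos : 0 < S := by
    obtain ⟨j0, hj0⟩ := Function.ne_iff.mp htne
    have h : 0 < t j0 ^ 2 := by
      have := sq_abs (t j0)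
      have h2 : 0 < |t j0| := abs_pos.mpr hj0
      nlinarith
    exact lt_of_lt_of_le h (Finset.single_le_sum (fun i _ => sq_nonneg (t i)) (Finset.mem_univ j0))
  set G : Fin n → Fin n → ℝ := fun j j' => ∑ i, B i j * B i j' with hG
  have h0 : (0:ℝ) = ∑ j, ∑ j', t j * t j' * G j j' := by
    have e1 : (0:ℝ) = ∑ i, (B.mulVec t i) * (B.mulVec t i) := by simp [ht]
    rw [e1]
    simp only [Matrix.mulVec, dotProduct]
    have e2 : ∀ i, (∑ j, B i j * t j) * (∑ j', B i j' * t j')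
        = ∑ j, ∑ j', t j * t j' * (B i j * B i j') := by
      intro i
      rw [Finset.sum_mul_sum]
      exact Finset.sum_congr rfl fun j _ => Finset.sum_congr rfl fun j' _ => by ring
    simp only [e2]
    rw [Finset.sum_comm]
    refine Finset.sum_congr rfl fun j _ => ?_
    rw [Finset.sum_comm]
    refine Finset.sum_congr rfl fun j' _ => ?_
    rw [hG, Finset.mul_sum]
  have hdiag : ∀ j, G j j = 1 := by
    intro j
    rw [hG]
    simpa [sq] using hunit j
  have hsplit : ∀ j : Fin n, ∑ j', t j * t j' * G j j'
      = t j ^ 2 + ∑ j' ∈ Finset.univ.erase j, t j * t j' * G j j' := by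
    intro j
    rw [← Finset.add_sum_erase _ _ (Finset.mem_univ j), hdiag]
    ring_nf
  have h0' : (0:ℝ) = S + ∑ j, ∑ j' ∈ Finset.univ.erase j, t j * t j' * G j j' := by
    rw [h0, hS]
    simp only [hsplit]
    rw [Finset.sum_add_distrib]
  set A := ∑ j, |t j| with hA
  have hbound : S ≤ μ * (A * A - S) := by
    have h1 : ∀ j : Fin n, ∀ j' ∈ Finset.univ.erase j,
        -(μ * (|t j| * |t j'|)) ≤ t j * t j' * G j j' := by
      intro j j' hj'
      have hne : j ≠ j' := (Finset.ne_of_mem_erase hj').symm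
      have := hcoh j j' hne
      have habs : |t j * t j' * G j j'| ≤ |t j| * |t j'| * μ := by
        rw [abs_mul, abs_mul]
        exact mul_le_mul_of_nonneg_left this (by positivity)
      nlinarith [neg_abs_le (t j * t j' * G j j')]
    have e3 : A * A - S = ∑ j, ∑ j' ∈ Finset.univ.erase j, |t j| * |t j'| := by
      have e4 : ∀ j : Fin n, ∑ j' ∈ Finset.univ.erase j, |t j| * |t j'| = |t j| * A - t j ^ 2 := by
        intro j
        rw [← Finset.mul_sum, Finset.sum_erase_eq_sub (Finset.mem_univ j), ← hA, mul_sub]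
        congr 1
        rw [← sq_abs]
        ring
      simp only [e4]
      rw [Finset.sum_sub_distrib, ← Finset.sum_mul, ← hA, ← hS]
    have h2 : -(μ * (A * A - S)) ≤ ∑ j, ∑ j' ∈ Finset.univ.erase j, t j * t j' * G j j' := by
      rw [e3, Finset.mul_sum, ← Finset.sum_neg_distrib]
      refine Finset.sum_le_sum fun j _ => ?_
      rw [Finset.mul_sum, ← Finset.sum_neg_distrib]
      exact Finset.sum_le_sum (h1 j)
    linarith
  have hcs : A * A ≤ (k : ℝ) * S := by
    set supp := Finset.univ.filter fun i => t i ≠ 0 with hsupp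
    have hAsupp : A = ∑ j ∈ supp, |t j| := by
      rw [hA]
      symm
      apply Finset.sum_subset (Finset.subset_univ _)
      intro x _ hx
      simp only [hsupp, Finset.mem_filter, Finset.mem_univ, true_and, not_not] at hx
      simp [hx]
    have hCS := Finset.sum_mul_sq_le_sq_mul_sq supp (fun _ => (1:ℝ)) (fun j => |t j|)
    simp only [one_pow, one_mul, Finset.sum_const, nsmul_eq_mul, mul_one] at hCS
    have hsub : ∑ j ∈ supp, |t j| ^ 2 ≤ S := by
      rw [hS]
      calc ∑ j ∈ supp, |t j| ^ 2 = ∑ j ∈ supp, t j ^ 2 := by simp [sq_abs]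
        _ ≤ ∑ j, t j ^ 2 := Finset.sum_le_sum_of_subset_of_nonneg (Finset.subset_univ _)
            (fun i _ _ => sq_nonneg _)
    calc A * A = (∑ j ∈ supp, |t j|) ^ 2 := by rw [hAsupp]; ring
      _ ≤ (supp.card : ℝ) * ∑ j ∈ supp, |t j| ^ 2 := hCS
      _ ≤ (k : ℝ) * S := by
          apply mul_le_mul hcard hsub (Finset.sum_nonneg fun _ _ => sq_nonneg _)
            (Nat.cast_nonneg k)
  have hfin : S * (1 + μ) ≤ (k:ℝ) * μ * S := by nlinarith
  nlinarith [mul_lt_mul_of_pos_right hk hSpos]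

theorem identification_of_corrupted_nodes {m r n : ℕ} (hm : m > r + 2)
    (X : Matrix (Fin (m - 1)) (Fin r) ℝ)
    -- `[X 1]` has full column rank
    (hrank : (augOnes X).rank = r + 1)
    -- rows of `R̄` form an orthonormal basis of the null space of `[X 1]ᵀ`
    (R : Matrix (Fin (m - r - 2)) (Fin (m - 1)) ℝ)
    (horth : R * Rᵀ = 1)
    (hnull : R * augOnes X = 0)
    -- columns of `R̄` are nonzero
    (hcols : ∀ j, ∃ i, R i j ≠ 0)
    (k : ℕ)
    (hcoh : (k : ℝ) < 1 + 1 / mutualCoherence (colNormalize R))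
    -- measurement model for the `n` target nodes
    (q : Fin n → Fin r → ℝ) (s : Fin n → Fin (m - 1) → ℝ) (c : Fin n → ℝ)
    (mt : Fin n → Fin (m - 1) → ℝ)
    (hsparse : ∀ j, l0norm (s j) ≤ k)
    (hmt : ∀ j, mt j = X.mulVec (q j) + s j + c j • (1 : Fin (m - 1) → ℝ)) :
    ∀ j : Fin n, R.mulVec (mt j) = 0 ↔ s j = 0 := by
  -- basic facts
  have hm1 : 2 ≤ m - 1 := by omega
  -- R annihilates X and 1
  have hRX : R * X = 0 := by
    ext i j
    have h := congrFun (congrFun hnull i) ⟨(j : ℕ), by omega⟩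
    simp only [Matrix.mul_apply, Matrix.zero_apply] at h ⊢
    rw [← h]
    refine Finset.sum_congr rfl fun a _ => ?_
    congr 1
    simp [augOnes, j.isLt]
  have hR1 : R.mulVec (fun _ => (1:ℝ)) = 0 := by
    ext i
    have h := congrFun (congrFun hnull i) ⟨r, by omega⟩
    simp only [Matrix.mul_apply, Matrix.zero_apply] at h
    simp only [Matrix.mulVec, dotProduct, Pi.zero_apply, mul_one]
    rw [← h]
    refine Finset.sum_congr rfl fun a _ => ?_
    simp [augOnes]
  -- reduction : R mt = R s
  have hred : ∀ j, R.mulVec (mt j) = R.mulVec (s j) := by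
    intro j
    rw [hmt j]
    have h1 : R.mulVec (X.mulVec (q j)) = 0 := by
      rw [Matrix.mulVec_mulVec, hRX]
      simp
    have h2 : R.mulVec (c j • (1 : Fin (m - 1) → ℝ)) = 0 := by
      rw [Matrix.mulVec_smul]
      have : (1 : Fin (m - 1) → ℝ) = fun _ => (1:ℝ) := rfl
      rw [this, hR1]
      simp
    rw [Matrix.mulVec_add, Matrix.mulVec_add, h1, h2]
    simp
  -- normalized columns
  set B := colNormalize R with hB
  set nrm : Fin (m - 1) → ℝ := fun j => Real.sqrt (∑ i, R i j ^ 2) with hnrm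
  have hnrmpos : ∀ j, 0 < nrm j := by
    intro j
    obtain ⟨i, hi⟩ := hcols j
    apply Real.sqrt_pos.mpr
    have : 0 < R i j ^ 2 := by positivity
    exact lt_of_lt_of_le this (Finset.single_le_sum (fun a _ => sq_nonneg (R a j)) (Finset.mem_univ i))
  have hnrmsq : ∀ j, nrm j ^ 2 = ∑ i, R i j ^ 2 :=
    fun j => Real.sq_sqrt (Finset.sum_nonneg fun a _ => sq_nonneg _)
  have hunit : ∀ j, ∑ i, B i j ^ 2 = 1 := by
    intro j
    simp only [hB, colNormalize, Matrix.of_apply, div_pow]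
    rw [← Finset.sum_div, Real.sq_sqrt (Finset.sum_nonneg fun a _ => sq_nonneg _)]
    exact div_self (Real.sqrt_pos.mp (hnrmpos j)).ne'
  -- coherence bounds
  set μ := mutualCoherence B with hμ
  have hbdd : BddAbove {x : ℝ | ∃ i j : Fin (m-1), i ≠ j ∧ x = |∑ k, B k i * B k j|} := by
    apply Set.Finite.bddAbove
    apply Set.Finite.subset
      (Set.finite_range (fun p : Fin (m-1) × Fin (m-1) => |∑ k, B k p.1 * B k p.2|))
    rintro x ⟨i, j, -, rfl⟩
    exact ⟨(i, j), rfl⟩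
  have hle : ∀ i j : Fin (m-1), i ≠ j → |∑ k, B k i * B k j| ≤ μ := by
    intro i j hij
    exact le_csSup hbdd ⟨i, j, hij, rfl⟩
  have hμ0 : 0 ≤ μ := by
    have hne : (⟨0, by omega⟩ : Fin (m-1)) ≠ ⟨1, by omega⟩ := by
      intro h
      simpa using congrArg Fin.val h
    exact le_trans (abs_nonneg _) (hle _ _ hne)
  have hkμ : (k : ℝ) * μ < 1 + μ := by
    rcases eq_or_lt_of_le hμ0 with h0 | hpos
    · rw [← h0] at hcoh ⊢
      simp only [div_zero, add_zero, mul_zero] at hcoh ⊢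
      norm_num
    · have h1 : (k:ℝ) * μ < (1 + 1/μ) * μ := mul_lt_mul_of_pos_right hcoh hpos
      rw [add_mul, one_mul, div_mul_cancel₀ _ hpos.ne'] at h1
      linarith
  intro j
  constructor
  · intro h
    have hRs : R.mulVec (s j) = 0 := by rw [← hred j, h]
    -- t = nrm • s
    set t : Fin (m-1) → ℝ := fun i => nrm i * s j i with hts
    have hBt : B.mulVec t = 0 := by
      ext i
      have : (B.mulVec t) i = (R.mulVec (s j)) i := by
        simp only [Matrix.mulVec, dotProduct, hB, colNormalize, Matrix.of_apply, hts]
        refine Finset.sum_congr rfl fun a _ => ?_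
        have hr : Real.sqrt (∑ k, R k a ^ 2) = nrm a := rfl
        have hne : nrm a ≠ 0 := (hnrmpos a).ne'
        rw [hr]
        field_simp
      rw [this, hRs]
    have hsupp : ((Finset.univ.filter fun i => t i ≠ 0).card : ℝ) ≤ k := by
      have hEq : (Finset.univ.filter fun i => t i ≠ 0) = (Finset.univ.filter fun i => s j i ≠ 0) := by
        apply Finset.filter_congr
        intro i _
        simp only [hts, ne_eq, mul_eq_zero, not_or, eq_iff_iff]
        constructor
        · tauto
        · intro hi
          exact ⟨(hnrmpos i).ne', hi⟩
      rw [hEq]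
      exact_mod_cast hsparse j
    have ht0 := sparse_null_aux B μ hμ0 hunit hle k hkμ t hsupp hBt
    funext i
    have := congrFun ht0 i
    simp only [hts, Pi.zero_apply, mul_eq_zero] at this
    rcases this with h' | h'
    · exact absurd h' (hnrmpos i).ne'
    · exact h'
  · intro h
    rw [hred j, h]
    simp
end
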